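/- Let 0 < s < 1, let t > 0, let μ be a Radon measure on ℝ^d, and let r > 0 be such that the ball B(0,r) has t-thin boundary with respect to μ. Then there is a constant C, depending only on d, s and t, such that for every x ∈ B(0,r) and every ε_1 with 0 < ε_1 < 2r, |R^s_{ε_1, 2r}(χ_{B(0,r)^c} μ)(x)| ≤ C · μ(B(0,3r)) / r^s. -/

import Mathlib

open MeasureTheory Metric Set ENNReal Filter Topology

/-- A ball `B(x,r)` has `t`-thin boundary with respect to `μ` if
`μ({y ∈ B(x,2r) : dist(y, ∂B(x,r)) ≤ λ r}) ≤ t λ μ(B(x,2r))` for all `λ > 0`. -/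
def ThinBoundary {d : ℕ} (μ : Measure (EuclideanSpace ℝ (Fin d))) (t : ℝ)
    (x : EuclideanSpace ℝ (Fin d)) (r : ℝ) : Prop :=
  ∀ lam : ℝ, 0 < lam →
    μ {y | y ∈ ball x (2 * r) ∧ infDist y (sphere x r) ≤ lam * r}
      ≤ ENNReal.ofReal (t * lam) * μ (ball x (2 * r))

/-- The doubly truncated `s`-Riesz transform
`R^s_{ε₁,ε₂}(ν)(x) = ∫_{ε₁<|y−x|≤ε₂} (y−x)/|y−x|^{1+s} dν(y)`. -/
noncomputable def truncRiesz {d : ℕ} (μ : Measure (EuclideanSpace ℝ (Fin d))) (s ε₁ ε₂ : ℝ)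
    (x : EuclideanSpace ℝ (Fin d)) : EuclideanSpace ℝ (Fin d) :=
  ∫ y in {y | ε₁ < dist y x ∧ dist y x ≤ ε₂}, (‖y - x‖ ^ (1 + s))⁻¹ • (y - x) ∂μ

lemma kernel_norm_le {d : ℕ} {s : ℝ} (hs : 0 < s) (x y : EuclideanSpace ℝ (Fin d)) {m : ℝ}
    (hm : 0 < m) (hle : m ≤ ‖y - x‖) :
    ‖(‖y - x‖ ^ (1 + s))⁻¹ • (y - x)‖ ≤ m ^ (-s) := by
  have hn : 0 < ‖y - x‖ := lt_of_lt_of_le hm hle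
  set n := ‖y - x‖ with hndef
  have hpos : 0 < n ^ (1 + s) := Real.rpow_pos_of_pos hn _
  have key : (n ^ (1 + s))⁻¹ * n = n ^ (-s) := by
    rw [inv_mul_eq_div, div_eq_iff hpos.ne', ← Real.rpow_add hn]
    norm_num
  calc ‖(n ^ (1 + s))⁻¹ • (y - x)‖ = (n ^ (1 + s))⁻¹ * n := by
        rw [norm_smul, Real.norm_eq_abs, abs_of_nonneg (by positivity)]
    _ = n ^ (-s) := key
    _ ≤ m ^ (-s) := Real.rpow_le_rpow_of_nonpos hm hle (by linarith)

lemma geom_id {s t r : ℝ} (hr : 0 < r) (k : ℕ) :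
    ((1/2 : ℝ) ^ (k+1) * r) ^ (-s) * (t * (1/2) ^ k)
      = (t * 2 ^ s * r ^ (-s)) * ((2:ℝ) ^ (s-1)) ^ k := by
  induction k with
  | zero =>
      simp only [zero_add, pow_zero, pow_one, mul_one]
      rw [Real.mul_rpow (by norm_num) hr.le]
      have : ((1/2 : ℝ)) ^ (-s) = 2 ^ s := by
        rw [one_div, Real.inv_rpow (by norm_num), Real.rpow_neg (by norm_num), inv_inv]
      rw [this]; ring
  | succ k ih =>
      have h1 : ((1/2 : ℝ)) ^ (k+1+1) * r = (1/2) * ((1/2) ^ (k+1) * r) := by ring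
      have h2 : ((1/2 : ℝ) * ((1/2) ^ (k+1) * r)) ^ (-s)
          = (1/2 : ℝ) ^ (-s) * ((1/2) ^ (k+1) * r) ^ (-s) :=
        Real.mul_rpow (by norm_num) (by positivity)
      have h3 : ((1/2 : ℝ)) ^ (-s) = 2 ^ s := by
        rw [one_div, Real.inv_rpow (by norm_num), Real.rpow_neg (by norm_num), inv_inv]
      have h4 : (2:ℝ) ^ s * (1/2) = 2 ^ (s - 1) := by
        rw [Real.rpow_sub (by norm_num), Real.rpow_one]; ring
      calc ((1/2 : ℝ) ^ (k+1+1) * r) ^ (-s) * (t * (1/2) ^ (k+1))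
          = (2 ^ s * (1/2)) * (((1/2 : ℝ) ^ (k+1) * r) ^ (-s) * (t * (1/2) ^ k)) := by
            rw [h1, h2, h3]; ring
        _ = (t * 2 ^ s * r ^ (-s)) * ((2:ℝ) ^ (s-1)) ^ (k+1) := by
            rw [h4, ih]; ring

theorem statement15 (d : ℕ) (s t : ℝ) (hs0 : 0 < s) (hs1 : s < 1) (ht : 0 < t) :
    ∃ C : ℝ, 0 < C ∧
      ∀ (μ : Measure (EuclideanSpace ℝ (Fin d))) [IsLocallyFiniteMeasure μ],
        ∀ r : ℝ, 0 < r → ThinBoundary μ t (0 : EuclideanSpace ℝ (Fin d)) r →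
          ∀ x ∈ ball (0 : EuclideanSpace ℝ (Fin d)) r, ∀ ε₁ : ℝ, 0 < ε₁ → ε₁ < 2 * r →
            ‖truncRiesz (μ.restrict ((ball (0 : EuclideanSpace ℝ (Fin d)) r)ᶜ)) s ε₁ (2 * r) x‖
              ≤ C * (μ (ball (0 : EuclideanSpace ℝ (Fin d)) (3 * r))).toReal / r ^ s := by
  have h2s : (0:ℝ) < 2 ^ s := Real.rpow_pos_of_pos two_pos _
  set q : ℝ := (2:ℝ) ^ (s - 1) with hqdef
  have hq0 : 0 < q := Real.rpow_pos_of_pos two_pos _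
  have hq1 : q < 1 := Real.rpow_lt_one_of_one_lt_of_neg one_lt_two (by linarith)
  have h1q : (0:ℝ) < 1 - q := by linarith
  have hC' : 0 < t * 2 ^ s * (1 - q)⁻¹ := mul_pos (mul_pos ht h2s) (inv_pos.2 h1q)
  refine ⟨1 + t * 2 ^ s * (1 - q)⁻¹, by linarith, ?_⟩
  intro μ _inst r hr hthin x hx ε₁ hε₀ hε₂
  have hxr : ‖x‖ < r := mem_ball_zero_iff.mp hx
  have hM3top : μ (ball (0:EuclideanSpace ℝ (Fin d)) (3*r)) ≠ ∞ :=
    ((measure_mono ball_subset_closedBall).trans_lt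
      (isCompact_closedBall (0:EuclideanSpace ℝ (Fin d)) (3*r)).measure_lt_top).ne
  have hM2top : μ (ball (0:EuclideanSpace ℝ (Fin d)) (2*r)) ≠ ∞ :=
    ((measure_mono ball_subset_closedBall).trans_lt
      (isCompact_closedBall (0:EuclideanSpace ℝ (Fin d)) (2*r)).measure_lt_top).ne
  have hM23 : μ (ball (0:EuclideanSpace ℝ (Fin d)) (2*r)) ≤ μ (ball (0:EuclideanSpace ℝ (Fin d)) (3*r)) :=
    measure_mono (ball_subset_ball (by linarith))
  set B : Set (EuclideanSpace ℝ (Fin d)) := ball 0 r with hBdef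
  set Z : Set (EuclideanSpace ℝ (Fin d)) := {y | ‖y‖ = r} with hZdef
  set F : Set (EuclideanSpace ℝ (Fin d)) := {y | ‖y‖ < 3*r ∧ 2*r ≤ ‖y‖} with hFdef
  set A : ℕ → Set (EuclideanSpace ℝ (Fin d)) := fun k =>
    {y | ‖y‖ < 2*r ∧ (1/2:ℝ)^(k+1) * r < ‖y‖ - r ∧ ‖y‖ - r ≤ (1/2:ℝ)^k * r} with hAdef
  -- Z is null
  have hZ0 : μ Z = 0 := by
    have hle : ∀ lam : ℝ, 0 < lam →
        μ Z ≤ ENNReal.ofReal (t * lam) * μ (ball (0:EuclideanSpace ℝ (Fin d)) (2*r)) := by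
      intro lam hlam
      refine le_trans (measure_mono ?_) (hthin lam hlam)
      intro y hy
      have hyr : ‖y‖ = r := hy
      refine ⟨mem_ball_zero_iff.mpr (by rw [hyr]; linarith), ?_⟩
      have : y ∈ sphere (0:EuclideanSpace ℝ (Fin d)) r := by
        simp [mem_sphere, dist_zero_right, hyr]
      rw [infDist_zero_of_mem this]
      positivity
    have htt : Tendsto (fun lam : ℝ => ENNReal.ofReal (t * lam) * μ (ball (0:EuclideanSpace ℝ (Fin d)) (2*r)))
        (𝓝[>] (0:ℝ)) (𝓝 0) := by
      have h1 : Tendsto (fun lam : ℝ => ENNReal.ofReal (t * lam)) (𝓝[>] (0:ℝ)) (𝓝 0) := by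
        have h0 : Tendsto (fun lam : ℝ => t * lam) (𝓝 (0:ℝ)) (𝓝 (t * 0)) :=
          (continuous_const.mul continuous_id).tendsto 0
        rw [mul_zero] at h0
        simpa [Function.comp_def] using (ENNReal.continuous_ofReal.tendsto 0).comp (h0.mono_left nhdsWithin_le_nhds)
      simpa using ENNReal.Tendsto.mul_const h1 (Or.inr hM2top)
    refine le_antisymm (ge_of_tendsto htt ?_) zero_le
    filter_upwards [self_mem_nhdsWithin] with lam hlam using hle lam hlam
  -- covering
  have cover : {y : EuclideanSpace ℝ (Fin d) | ε₁ < dist y x ∧ dist y x ≤ 2*r} ∩ Bᶜ ⊆ Z ∪ (F ∪ ⋃ k, A k) := by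
    rintro y ⟨⟨h1, h2⟩, h3⟩
    have hyr : r ≤ ‖y‖ := not_lt.mp (fun h => h3 (mem_ball_zero_iff.mpr h))
    have hxy : dist y x = ‖y - x‖ := dist_eq_norm _ _
    have hy3 : ‖y‖ < 3*r := by
      have h5 : ‖y‖ - ‖x‖ ≤ ‖y - x‖ := norm_sub_norm_le _ _
      rw [← hxy] at h5; linarith
    rcases eq_or_lt_of_le hyr with heq | hlt
    · exact Or.inl heq.symm
    · rcases le_or_gt (2*r) ‖y‖ with h2r | h2r
      · exact Or.inr (Or.inl ⟨hy3, h2r⟩)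
      · have hδ0 : 0 < ‖y‖ - r := by linarith
        have hδr : ‖y‖ - r < r := by linarith
        have hex : ∃ n : ℕ, (1/2:ℝ)^(n+1) * r < ‖y‖ - r := by
          obtain ⟨n, hn⟩ := exists_pow_lt_of_lt_one (div_pos hδ0 hr) (by norm_num : (1/2:ℝ) < 1)
          refine ⟨n, ?_⟩
          have h6 : (1/2:ℝ)^(n+1) ≤ (1/2:ℝ)^n :=
            pow_le_pow_of_le_one (by norm_num) (by norm_num) (Nat.le_succ n)
          have h7 : (1/2:ℝ)^n * r < ‖y‖ - r := by
            rw [← lt_div_iff₀ hr] at *; linarith [hn]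
          nlinarith [hr]
        refine Or.inr (Or.inr (mem_iUnion.2 ⟨Nat.find hex, h2r, Nat.find_spec hex, ?_⟩))
        rcases Nat.eq_zero_or_pos (Nat.find hex) with hk | hk
        · rw [hk]; simpa using hδr.le
        · have hmin := Nat.find_min hex (Nat.sub_lt hk one_pos)
          push_neg at hmin
          have heq : Nat.find hex - 1 + 1 = Nat.find hex := by omega
          rwa [heq] at hmin
  -- thin boundary bound for A k
  have hAk : ∀ k, μ (A k) ≤ ENNReal.ofReal (t * (1/2:ℝ)^k) * μ (ball (0:EuclideanSpace ℝ (Fin d)) (2*r)) := by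
    intro k
    refine le_trans (measure_mono ?_) (hthin ((1/2:ℝ)^k) (by positivity))
    rintro y ⟨hy2, hlow, hup⟩
    refine ⟨mem_ball_zero_iff.mpr hy2, ?_⟩
    have hyr : r < ‖y‖ := by nlinarith [pow_pos (by norm_num : (0:ℝ) < 1/2) (k+1)]
    have hy0 : (0:ℝ) < ‖y‖ := lt_trans hr hyr
    have hz : ((r / ‖y‖) • y) ∈ sphere (0:EuclideanSpace ℝ (Fin d)) r := by
      simp only [mem_sphere, dist_zero_right, norm_smul, Real.norm_eq_abs]
      rw [abs_of_nonneg (by positivity)]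
      field_simp
    have hd : dist y ((r / ‖y‖) • y) = ‖y‖ - r := by
      rw [dist_eq_norm]
      have h8 : y - (r / ‖y‖) • y = (1 - r / ‖y‖) • y := by
        rw [sub_smul, one_smul]
      rw [h8, norm_smul, Real.norm_eq_abs, abs_of_nonneg (by
        rw [sub_nonneg, div_le_one hy0]; exact hyr.le)]
      field_simp
    calc infDist y (sphere (0:EuclideanSpace ℝ (Fin d)) r) ≤ dist y ((r / ‖y‖) • y) := infDist_le_dist_of_mem hz
      _ = ‖y‖ - r := hd
      _ ≤ (1/2:ℝ)^k * r := hup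
  -- main estimate
  set g : EuclideanSpace ℝ (Fin d) → ℝ≥0∞ :=
    fun y => ENNReal.ofReal ‖(‖y - x‖ ^ (1 + s))⁻¹ • (y - x)‖ with hgdef
  set S : Set (EuclideanSpace ℝ (Fin d)) := {y | ε₁ < dist y x ∧ dist y x ≤ 2*r} with hSdef
  have hSmeas : MeasurableSet S := by
    have hdm : Measurable fun y : EuclideanSpace ℝ (Fin d) => dist y x :=
      (continuous_id.dist continuous_const).measurable
    exact (measurableSet_lt measurable_const hdm).inter (measurableSet_le hdm measurable_const)
  have step1 : ‖truncRiesz (μ.restrict Bᶜ) s ε₁ (2 * r) x‖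
      ≤ (∫⁻ y in S ∩ Bᶜ, g y ∂μ).toReal := by
    calc ‖truncRiesz (μ.restrict Bᶜ) s ε₁ (2 * r) x‖
        ≤ (∫⁻ y, g y ∂((μ.restrict Bᶜ).restrict S)).toReal :=
          norm_integral_le_lintegral_norm (μ := (μ.restrict Bᶜ).restrict S)
            (fun y => (‖y - x‖ ^ (1 + s))⁻¹ • (y - x))
      _ = (∫⁻ y in S ∩ Bᶜ, g y ∂μ).toReal := by rw [Measure.restrict_restrict hSmeas]
  have hFle : ∫⁻ y in F, g y ∂μ
      ≤ ENNReal.ofReal (r ^ (-s)) * μ (ball (0:EuclideanSpace ℝ (Fin d)) (3*r)) := by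
    calc ∫⁻ y in F, g y ∂μ ≤ ∫⁻ _ in F, ENNReal.ofReal (r ^ (-s)) ∂μ := by
          refine setLIntegral_mono measurable_const ?_
          rintro y ⟨hy3, hy2⟩
          refine ENNReal.ofReal_le_ofReal (kernel_norm_le hs0 x y hr ?_)
          have h5 := norm_sub_norm_le y x
          linarith
      _ = ENNReal.ofReal (r ^ (-s)) * μ F := setLIntegral_const _ _
      _ ≤ _ := mul_le_mul_right (measure_mono fun y hy => mem_ball_zero_iff.mpr hy.1) _
  have hAle : ∀ k, ∫⁻ y in A k, g y ∂μ
      ≤ ENNReal.ofReal ((((1/2:ℝ)^(k+1)*r)^(-s)) * (t*(1/2:ℝ)^k))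
          * μ (ball (0:EuclideanSpace ℝ (Fin d)) (2*r)) := by
    intro k
    have hmk : (0:ℝ) < (1/2:ℝ)^(k+1)*r := by positivity
    calc ∫⁻ y in A k, g y ∂μ
        ≤ ∫⁻ _ in A k, ENNReal.ofReal (((1/2:ℝ)^(k+1)*r)^(-s)) ∂μ := by
          refine setLIntegral_mono measurable_const ?_
          rintro y ⟨hy2, hlow, hup⟩
          refine ENNReal.ofReal_le_ofReal (kernel_norm_le hs0 x y hmk ?_)
          have h5 := norm_sub_norm_le y x
          linarith
      _ = ENNReal.ofReal (((1/2:ℝ)^(k+1)*r)^(-s)) * μ (A k) := setLIntegral_const _ _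
      _ ≤ ENNReal.ofReal (((1/2:ℝ)^(k+1)*r)^(-s))
            * (ENNReal.ofReal (t*(1/2:ℝ)^k) * μ (ball (0:EuclideanSpace ℝ (Fin d)) (2*r))) :=
          mul_le_mul_right (hAk k) _
      _ = _ := by rw [← mul_assoc, ← ENNReal.ofReal_mul (by positivity)]
  have hc_nonneg : (0:ℝ) ≤ t * 2^s * r^(-s) :=
    mul_nonneg (mul_nonneg ht.le h2s.le) (Real.rpow_nonneg hr.le _)
  have hgeo : (1 - ENNReal.ofReal q)⁻¹ = ENNReal.ofReal ((1-q)⁻¹) := by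
    rw [ENNReal.ofReal_inv_of_pos h1q, ENNReal.ofReal_sub 1 hq0.le, ENNReal.ofReal_one]
  have hsum : ∑' k, ∫⁻ y in A k, g y ∂μ
      ≤ ENNReal.ofReal (t * 2^s * (1-q)⁻¹ * r^(-s))
          * μ (ball (0:EuclideanSpace ℝ (Fin d)) (2*r)) := by
    calc ∑' k, ∫⁻ y in A k, g y ∂μ
        ≤ ∑' k, ENNReal.ofReal ((((1/2:ℝ)^(k+1)*r)^(-s)) * (t*(1/2:ℝ)^k))
            * μ (ball (0:EuclideanSpace ℝ (Fin d)) (2*r)) :=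
          ENNReal.tsum_le_tsum fun k => hAle k
      _ = (∑' k, ENNReal.ofReal ((t * 2^s * r^(-s)) * q^k))
            * μ (ball (0:EuclideanSpace ℝ (Fin d)) (2*r)) := by
          rw [ENNReal.tsum_mul_right]
          congr 1
          exact tsum_congr fun k => by rw [geom_id hr k]
      _ = (ENNReal.ofReal (t * 2^s * r^(-s)) * ∑' k, (ENNReal.ofReal q)^k)
            * μ (ball (0:EuclideanSpace ℝ (Fin d)) (2*r)) := by
          congr 1
          simp_rw [ENNReal.ofReal_mul hc_nonneg, ENNReal.ofReal_pow hq0.le]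
          rw [ENNReal.tsum_mul_left]
      _ = ENNReal.ofReal (t * 2^s * (1-q)⁻¹ * r^(-s))
            * μ (ball (0:EuclideanSpace ℝ (Fin d)) (2*r)) := by
          rw [ENNReal.tsum_geometric, hgeo, ← ENNReal.ofReal_mul hc_nonneg]
          congr 2
          ring
  have hb_nonneg : (0:ℝ) ≤ t * 2^s * (1-q)⁻¹ * r^(-s) :=
    mul_nonneg (mul_nonneg (mul_nonneg ht.le h2s.le) (inv_nonneg.2 h1q.le))
      (Real.rpow_nonneg hr.le _)
  have htotal : ∫⁻ y in S ∩ Bᶜ, g y ∂μ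
      ≤ ENNReal.ofReal ((1 + t*2^s*(1-q)⁻¹) * r^(-s))
          * μ (ball (0:EuclideanSpace ℝ (Fin d)) (3*r)) := by
    calc ∫⁻ y in S ∩ Bᶜ, g y ∂μ
        ≤ ∫⁻ y in Z ∪ (F ∪ ⋃ k, A k), g y ∂μ := lintegral_mono_set cover
      _ ≤ (∫⁻ y in Z, g y ∂μ) + (∫⁻ y in F ∪ ⋃ k, A k, g y ∂μ) := lintegral_union_le _ _ _
      _ ≤ (∫⁻ y in Z, g y ∂μ) + ((∫⁻ y in F, g y ∂μ) + ∫⁻ y in ⋃ k, A k, g y ∂μ) :=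
          add_le_add_right (lintegral_union_le _ _ _) _
      _ ≤ 0 + (ENNReal.ofReal (r^(-s)) * μ (ball (0:EuclideanSpace ℝ (Fin d)) (3*r))
            + ENNReal.ofReal (t*2^s*(1-q)⁻¹*r^(-s))
              * μ (ball (0:EuclideanSpace ℝ (Fin d)) (3*r))) := by
          refine add_le_add (le_of_eq (setLIntegral_measure_zero _ _ hZ0)) (add_le_add hFle ?_)
          calc ∫⁻ y in ⋃ k, A k, g y ∂μ ≤ ∑' k, ∫⁻ y in A k, g y ∂μ := lintegral_iUnion_le _ _
            _ ≤ ENNReal.ofReal (t * 2^s * (1-q)⁻¹ * r^(-s))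
                  * μ (ball (0:EuclideanSpace ℝ (Fin d)) (2*r)) := hsum
            _ ≤ _ := mul_le_mul_right hM23 _
      _ = ENNReal.ofReal ((1 + t*2^s*(1-q)⁻¹) * r^(-s))
            * μ (ball (0:EuclideanSpace ℝ (Fin d)) (3*r)) := by
          rw [zero_add, ← add_mul, ← ENNReal.ofReal_add (Real.rpow_nonneg hr.le _) hb_nonneg]
          congr 2
          ring
  have hnn : (0:ℝ) ≤ (1 + t*2^s*(1-q)⁻¹) * r^(-s) :=
    mul_nonneg (by linarith) (Real.rpow_nonneg hr.le _)
  calc ‖truncRiesz (μ.restrict Bᶜ) s ε₁ (2 * r) x‖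
      ≤ (∫⁻ y in S ∩ Bᶜ, g y ∂μ).toReal := step1
    _ ≤ (ENNReal.ofReal ((1 + t*2^s*(1-q)⁻¹) * r^(-s))
          * μ (ball (0:EuclideanSpace ℝ (Fin d)) (3*r))).toReal :=
        ENNReal.toReal_mono (ENNReal.mul_ne_top ENNReal.ofReal_ne_top hM3top) htotal
    _ = (1 + t*2^s*(1-q)⁻¹) * (μ (ball (0:EuclideanSpace ℝ (Fin d)) (3*r))).toReal / r^s := by
        rw [ENNReal.toReal_mul, ENNReal.toReal_ofReal hnn, Real.rpow_neg hr.le]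
        ring
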